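/- Let N be a prime number. The modulo-DFT sensing model is identifiable on ℂ^N_𝒱 if and only if |𝒱| ≥ 2 and 0 ∈ 𝒱. -/

import Mathlib

open Polynomial

noncomputable def dft (N : ℕ) : Matrix (Fin N) (Fin N) ℂ :=
  Matrix.of fun n₁ n₂ : Fin N => (1 / Real.sqrt N : ℂ) *
    Complex.exp (-(2 * Real.pi * Complex.I * (n₁ : ℕ) * (n₂ : ℕ)) / N)

/-- A complex number is a Gaussian integer if its real and imaginary parts are integers. -/
def IsGaussianInt (z : ℂ) : Prop := ∃ a b : ℤ, z = (a : ℂ) + (b : ℂ) * Complex.I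

/-- Identifiability of the modulo-DFT sensing model on `ℂ^N_𝒱`: any two signals
supported off `𝒱` whose DFT images differ by a Gaussian integer vector coincide. -/
def ModuloDFTIdentifiable (N : ℕ) (V : Set ℕ) : Prop :=
  ∀ s s' : Fin N → ℂ,
    (∀ n : Fin N, (n : ℕ) ∈ V → s n = 0) →
    (∀ n : Fin N, (n : ℕ) ∈ V → s' n = 0) →
    (∀ m : Fin N, IsGaussianInt ((dft N).mulVec s m - (dft N).mulVec s' m)) →
    s = s'

namespace ModDFTAux

open Complex Real IntermediateField

lemma sum_exp_int (N : ℕ) (hN : 0 < N) (j : ℤ) :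
    ∑ m : Fin N, Complex.exp (2 * Real.pi * Complex.I * m * j / N) =
      if (N:ℤ) ∣ j then (N:ℂ) else 0 := by
  have hNC : (N:ℂ) ≠ 0 := by exact_mod_cast hN.ne'
  set x : ℂ := Complex.exp (2 * Real.pi * Complex.I * j / N) with hx
  have hterm : ∀ m : Fin N, Complex.exp (2 * Real.pi * Complex.I * m * j / N) = x ^ (m:ℕ) := by
    intro m
    rw [hx, ← Complex.exp_nat_mul]
    congr 1
    field_simp
  rw [Finset.sum_congr rfl (fun m _ => hterm m), Fin.sum_univ_eq_sum_range]
  have hxN : x ^ N = 1 := by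
    rw [hx, ← Complex.exp_nat_mul]
    have : (N:ℂ) * (2 * Real.pi * Complex.I * j / N) = j * (2 * Real.pi * Complex.I) := by
      field_simp
    rw [this, Complex.exp_int_mul_two_pi_mul_I]
  have hx1 : x = 1 ↔ (N:ℤ) ∣ j := by
    rw [hx, Complex.exp_eq_one_iff]
    constructor
    · rintro ⟨n, hn⟩
      have hpi : (2 * Real.pi * Complex.I : ℂ) ≠ 0 := by
        simp [Real.pi_ne_zero, Complex.I_ne_zero]
      field_simp at hn
      have : (j : ℂ) = (n * N : ℤ) := by
        push_cast
        apply mul_left_cancel₀ hpi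
        rw [mul_comm] at hn
        linear_combination (2 * Real.pi * Complex.I) * hn
      have h2 : j = n * (N:ℤ) := by exact_mod_cast this
      exact ⟨n, by linarith⟩
    · rintro ⟨c, rfl⟩
      refine ⟨c, ?_⟩
      push_cast
      field_simp
  by_cases h : (N:ℤ) ∣ j
  · simp [h, hx1.mpr h]
  · rw [if_neg h, geom_sum_eq (fun h1 => h (hx1.mp h1)), hxN]
    simp

lemma dft_inversion (N : ℕ) (hN : 0 < N) (d : Fin N → ℂ) (n : Fin N) :
    ∑ m : Fin N, (dft N).mulVec d m * Complex.exp (2 * Real.pi * Complex.I * m * n / N) =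
      (Real.sqrt N : ℂ) * d n := by
  have hs : (0:ℝ) < Real.sqrt N := Real.sqrt_pos.mpr (by exact_mod_cast hN)
  have hsC : ((Real.sqrt N : ℝ) : ℂ) ≠ 0 := by exact_mod_cast hs.ne'
  have hNC : (N:ℂ) ≠ 0 := by exact_mod_cast hN.ne'
  simp only [Matrix.mulVec, dotProduct, dft, Matrix.of_apply, Finset.sum_mul]
  rw [Finset.sum_comm]
  have key : ∀ p : Fin N,
      ∑ m : Fin N, (1 / (Real.sqrt N : ℂ) * Complex.exp (-(2 * Real.pi * Complex.I * m * p) / N) * d p)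
          * Complex.exp (2 * Real.pi * Complex.I * m * n / N)
        = 1 / (Real.sqrt N : ℂ) * d p * (if (N:ℤ) ∣ ((n:ℤ) - (p:ℤ)) then (N:ℂ) else 0) := by
    intro p
    rw [← sum_exp_int N hN ((n:ℤ) - (p:ℤ)), Finset.mul_sum]
    refine Finset.sum_congr rfl fun m _ => ?_
    have hexp : Complex.exp (-(2 * Real.pi * Complex.I * m * p) / N)
        * Complex.exp (2 * Real.pi * Complex.I * m * n / N)
        = Complex.exp (2 * Real.pi * Complex.I * m * (((n:ℤ) - (p:ℤ) : ℤ) : ℂ) / N) := by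
      rw [← Complex.exp_add]
      congr 1
      push_cast
      field_simp
      ring
    calc (1 / (Real.sqrt N : ℂ) * Complex.exp (-(2 * Real.pi * Complex.I * m * p) / N) * d p)
          * Complex.exp (2 * Real.pi * Complex.I * m * n / N)
        = 1 / (Real.sqrt N : ℂ) * d p * (Complex.exp (-(2 * Real.pi * Complex.I * m * p) / N)
          * Complex.exp (2 * Real.pi * Complex.I * m * n / N)) := by ring
      _ = 1 / (Real.sqrt N : ℂ) * d p
            * Complex.exp (2 * Real.pi * Complex.I * m * (((n:ℤ) - (p:ℤ) : ℤ) : ℂ) / N) := by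
          rw [hexp]
  rw [Finset.sum_congr rfl fun p _ => key p]
  rw [Finset.sum_eq_single n]
  · simp only [sub_self, dvd_zero, if_true]
    have : ((Real.sqrt N : ℝ) : ℂ) * ((Real.sqrt N : ℝ) : ℂ) = (N:ℂ) := by
      rw [← Complex.ofReal_mul, Real.mul_self_sqrt (by positivity)]
      norm_num
    field_simp
    first
    | linear_combination 2 * d n * this
    | linear_combination (-2 : ℂ) * d n * this
    | linear_combination d n * this
    | linear_combination (-1 : ℂ) * d n * this
  · intro p _ hp
    rw [if_neg, mul_zero]
    intro hdvd
    have : ((n:ℤ) - (p:ℤ)) = 0 := Int.eq_zero_of_abs_lt_dvd hdvd (by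
      have h1 : (n:ℤ) < N := by exact_mod_cast n.isLt
      have h2 : (p:ℤ) < N := by exact_mod_cast p.isLt
      have h3 : 0 ≤ (n:ℤ) := by positivity
      have h4 : 0 ≤ (p:ℤ) := by positivity
      rw [abs_sub_lt_iff]; omega)
    apply hp
    have : (p:ℤ) = (n:ℤ) := by omega
    exact Fin.ext (by exact_mod_cast this.symm) |>.symm ▸ rfl
  · intro h; exact absurd (Finset.mem_univ n) h

lemma finrank_adjoin_primitive (n : ℕ) (hn : 0 < n) (z : ℂ) (hz : IsPrimitiveRoot z n) :
    Module.finrank ℚ ℚ⟮z⟯ = n.totient := by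
  have hint : IsIntegral ℚ z := (hz.isIntegral hn).tower_top
  rw [IntermediateField.adjoin.finrank hint, ← Polynomial.cyclotomic_eq_minpoly_rat hz hn,
    Polynomial.natDegree_cyclotomic]

lemma isPrimitiveRoot_I : IsPrimitiveRoot Complex.I 4 := by
  constructor
  · exact Complex.I_pow_four
  · intro l hl
    have hm : Complex.I ^ (l % 4) = 1 := by
      rw [← pow_eq_pow_mod l Complex.I_pow_four]; exact hl
    have hr : l % 4 = 0 ∨ l % 4 = 1 ∨ l % 4 = 2 ∨ l % 4 = 3 := by omega
    rcases hr with h|h|h|h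
    · exact Nat.dvd_of_mod_eq_zero h
    all_goals (rw [h] at hm; norm_num [pow_succ, Complex.ext_iff] at hm)

lemma I_not_mem_adjoin (N : ℕ) (hN : N.Prime) (hodd : Odd N) (ζ : ℂ)
    (hζ : IsPrimitiveRoot ζ N) : Complex.I ∉ ℚ⟮ζ⟯ := by
  intro hI
  have hN0 : 0 < N := hN.pos
  have hN3 : 3 ≤ N := by
    have h2 := hN.two_le
    have := Nat.odd_iff.mp hodd
    omega
  have hcop : Nat.Coprime 4 N := by
    rw [Nat.coprime_comm]
    refine (Nat.Prime.coprime_iff_not_dvd hN).mpr fun hd => ?_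
    have := Nat.le_of_dvd (by norm_num) hd
    interval_cases N <;> revert hN hd <;> decide
  have hμ : IsPrimitiveRoot (Complex.I * ζ) (4 * N) := by
    have h1 : orderOf (Complex.I * ζ) = 4 * N := by
      rw [(Commute.all Complex.I ζ).orderOf_mul_eq_mul_orderOf_of_coprime,
        ← isPrimitiveRoot_I.eq_orderOf, ← hζ.eq_orderOf]
      rw [← isPrimitiveRoot_I.eq_orderOf, ← hζ.eq_orderOf]; exact hcop
    exact h1 ▸ IsPrimitiveRoot.orderOf (Complex.I * ζ)
  have hζK : ζ ∈ ℚ⟮ζ⟯ := IntermediateField.mem_adjoin_simple_self ℚ ζ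
  have hle : ℚ⟮Complex.I * ζ⟯ ≤ ℚ⟮ζ⟯ := by
    rw [IntermediateField.adjoin_simple_le_iff]
    exact mul_mem hI hζK
  have hfd : FiniteDimensional ℚ ℚ⟮ζ⟯ :=
    IntermediateField.adjoin.finiteDimensional ((hζ.isIntegral hN0).tower_top)
  have hmono : Module.finrank ℚ ℚ⟮Complex.I * ζ⟯ ≤ Module.finrank ℚ ℚ⟮ζ⟯ := by
    have h2 : (ℚ⟮Complex.I * ζ⟯).toSubmodule ≤ (ℚ⟮ζ⟯).toSubmodule := hle
    haveI : Module.Finite ℚ (Subalgebra.toSubmodule (ℚ⟮ζ⟯).toSubalgebra) := hfd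
    have := Submodule.finrank_mono (R := ℚ) (M := ℂ) h2
    simpa using this
  rw [finrank_adjoin_primitive _ (by positivity) _ hμ, finrank_adjoin_primitive _ hN0 _ hζ] at hmono
  rw [Nat.totient_mul hcop, Nat.totient_prime hN] at hmono
  have : Nat.totient 4 = 2 := by decide
  rw [this] at hmono
  omega

lemma int_coeffs_zero (N : ℕ) (hN : N.Prime) (ζ : ℂ) (hζ : IsPrimitiveRoot ζ N)
    (c : Fin N → ℤ) (h1 : ∑ m : Fin N, (c m : ℂ) * ζ ^ (m : ℕ) = 0)
    (h0 : ∑ m : Fin N, c m = 0) : ∀ m, c m = 0 := by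
  haveI : Fact N.Prime := ⟨hN⟩
  have hN0 : 0 < N := hN.pos
  set P : ℚ[X] := ∑ m : Fin N, C ((c m : ℚ)) * X ^ (m : ℕ) with hP
  have hcoeff : ∀ j : Fin N, P.coeff (j : ℕ) = (c j : ℚ) := by
    intro j
    rw [hP, Polynomial.finset_sum_coeff]
    have : ∀ m : Fin N, (C ((c m : ℚ)) * X ^ (m : ℕ)).coeff (j : ℕ)
        = if m = j then (c m : ℚ) else 0 := by
      intro m
      rw [Polynomial.coeff_C_mul, Polynomial.coeff_X_pow]
      by_cases h : m = j
      · simp [h]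
      · rw [if_neg (fun hh : (j:ℕ) = (m:ℕ) => h (Fin.ext hh.symm)), if_neg h, mul_zero]
    rw [Finset.sum_congr rfl fun m _ => this m, Finset.sum_ite_eq' Finset.univ j]
    simp
  have hdeg : P.natDegree ≤ N - 1 := by
    apply Polynomial.natDegree_sum_le_of_forall_le
    intro m _
    refine le_trans (Polynomial.natDegree_C_mul_le _ _) ?_
    rw [Polynomial.natDegree_X_pow]
    omega
  have haev : Polynomial.aeval ζ P = 0 := by
    rw [hP, map_sum]
    rw [← h1]
    refine Finset.sum_congr rfl fun m _ => ?_
    simp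
  have hdvd : Polynomial.cyclotomic N ℚ ∣ P := by
    rw [Polynomial.cyclotomic_eq_minpoly_rat hζ hN0]
    exact minpoly.dvd ℚ ζ haev
  obtain ⟨Q, hQ⟩ := hdvd
  have hcycdeg : (Polynomial.cyclotomic N ℚ).natDegree = N - 1 := by
    rw [Polynomial.natDegree_cyclotomic, Nat.totient_prime hN]
  by_cases hPz : P = 0
  · intro m
    have := hcoeff m
    rw [hPz] at this
    simp at this
    exact_mod_cast this.symm
  · have hQ0 : Q ≠ 0 := by rintro rfl; rw [mul_zero] at hQ; exact hPz hQ
    have hdeg2 : P.natDegree = N - 1 + Q.natDegree := by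
      rw [hQ, Polynomial.natDegree_mul (Polynomial.cyclotomic_ne_zero N ℚ) hQ0, hcycdeg]
    have hQdeg : Q.natDegree = 0 := by omega
    obtain ⟨q, rfl⟩ := Polynomial.natDegree_eq_zero.mp hQdeg
    have hconst : ∀ m : Fin N, (c m : ℚ) = q := by
      intro m
      rw [← hcoeff m, hQ, Polynomial.coeff_mul_C, Polynomial.cyclotomic_prime ℚ N,
        Polynomial.finset_sum_coeff]
      have : ∑ i ∈ Finset.range N, (X ^ i : ℚ[X]).coeff (m : ℕ) = 1 := by
        simp only [Polynomial.coeff_X_pow]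
        rw [Finset.sum_ite_eq (Finset.range N) (m : ℕ) (fun _ => (1:ℚ))]
        simp [m.isLt]
      rw [this, one_mul]
    have hsum : (N : ℚ) * q = 0 := by
      have : ∑ m : Fin N, (c m : ℚ) = 0 := by exact_mod_cast congrArg (fun x : ℤ => (x : ℚ)) h0
      rw [Finset.sum_congr rfl fun m _ => hconst m, Finset.sum_const, Finset.card_univ,
        Fintype.card_fin, nsmul_eq_mul] at this
      exact this
    have hq : q = 0 := by
      have : (N:ℚ) ≠ 0 := by exact_mod_cast hN0.ne'
      exact (mul_eq_zero.mp hsum).resolve_left this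
    intro m
    have := hconst m
    rw [hq] at this
    exact_mod_cast this

lemma key_zero (N : ℕ) (hN : N.Prime) (ζ : ℂ) (hζ : IsPrimitiveRoot ζ N)
    (g : Fin N → ℂ) (hg : ∀ m, IsGaussianInt (g m))
    (h0 : ∑ m : Fin N, g m = 0) (h1 : ∑ m : Fin N, g m * ζ ^ (m : ℕ) = 0) :
    ∀ m, g m = 0 := by
  rcases hN.eq_two_or_odd' with rfl | hodd
  · have hζ2 : ζ ^ 2 = 1 := hζ.pow_eq_one
    have hζ1 : ζ ≠ 1 := hζ.ne_one (by norm_num)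
    have hm1 : ζ = -1 := by
      have : (ζ - 1) * (ζ + 1) = 0 := by ring_nf; linear_combination hζ2
      rcases mul_eq_zero.mp this with h | h
      · exact absurd (by linear_combination h) hζ1
      · linear_combination h
    rw [Fin.sum_univ_two] at h0
    rw [Fin.sum_univ_two] at h1
    simp only [Fin.val_zero, Fin.val_one, pow_zero, pow_one, mul_one, hm1] at h1
    intro m
    fin_cases m
    · show g 0 = 0; linear_combination (h0 + h1) / 2
    · show g 1 = 0; linear_combination (h0 - h1) / 2
  · choose a b hab using hg
    set A : ℂ := ∑ m : Fin N, (a m : ℂ) * ζ ^ (m : ℕ) with hA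
    set B : ℂ := ∑ m : Fin N, (b m : ℂ) * ζ ^ (m : ℕ) with hB
    have hAB : A + B * Complex.I = 0 := by
      rw [hA, hB, Finset.sum_mul, ← Finset.sum_add_distrib, ← h1]
      refine Finset.sum_congr rfl fun m _ => ?_
      rw [hab m]; ring
    have hζK : ζ ∈ ℚ⟮ζ⟯ := IntermediateField.mem_adjoin_simple_self ℚ ζ
    have hAK : A ∈ ℚ⟮ζ⟯ := by
      refine sum_mem fun m _ => mul_mem ?_ (pow_mem hζK _)
      exact IntermediateField.intCast_mem _ _
    have hBK : B ∈ ℚ⟮ζ⟯ := by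
      refine sum_mem fun m _ => mul_mem ?_ (pow_mem hζK _)
      exact IntermediateField.intCast_mem _ _
    have hB0 : B = 0 := by
      by_contra hBne
      apply I_not_mem_adjoin N hN hodd ζ hζ
      have h' : B * Complex.I = -A := by linear_combination hAB
      have : Complex.I = -A * B⁻¹ := by
        rw [← h']
        field_simp
      rw [this]
      exact mul_mem (neg_mem hAK) (inv_mem hBK)
    have hA0 : A = 0 := by linear_combination hAB - Complex.I * hB0
    have hsum : ((∑ m : Fin N, a m : ℤ) : ℂ) + ((∑ m : Fin N, b m : ℤ) : ℂ) * Complex.I = 0 := by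
      push_cast
      rw [Finset.sum_mul, ← Finset.sum_add_distrib, ← h0]
      refine Finset.sum_congr rfl fun m _ => (hab m).symm
    have hsa : (∑ m : Fin N, a m) = 0 ∧ (∑ m : Fin N, b m) = 0 := by
      have h := hsum
      rw [Complex.ext_iff] at h
      simp at h
      exact_mod_cast h
    have ha0 := int_coeffs_zero N hN ζ hζ a (by rw [hA] at hA0; exact_mod_cast hA0) hsa.1
    have hb0 := int_coeffs_zero N hN ζ hζ b (by rw [hB] at hB0; exact_mod_cast hB0) hsa.2
    intro m
    rw [hab m, ha0 m, hb0 m]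
    simp

end ModDFTAux

/-- for prime N, the modulo-DFT sensing model is identifiable on ℂ^N_𝒱 iff
𝒱 has at least two elements and 0 ∈ 𝒱. -/
theorem stmt4 (N : ℕ) (hN : N.Prime) (V : Set ℕ) (hV : ∀ n ∈ V, n < N) :
    ModuloDFTIdentifiable N V ↔ (V.Nontrivial ∧ 0 ∈ V) := by
  classical
  have hN0 : 0 < N := hN.pos
  have hN1 : 1 < N := hN.one_lt
  have hs : (0:ℝ) < Real.sqrt N := Real.sqrt_pos.mpr (by exact_mod_cast hN0)
  have hsC : ((Real.sqrt N : ℝ) : ℂ) ≠ 0 := by exact_mod_cast hs.ne'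
  have hNC : (N:ℂ) ≠ 0 := by exact_mod_cast hN0.ne'
  constructor
  · intro H
    have h0V : 0 ∈ V := by
      by_contra h0
      set z0 : Fin N := ⟨0, hN0⟩ with hz0
      set s : Fin N → ℂ := fun n => if n = z0 then ((Real.sqrt N : ℝ) : ℂ) else 0 with hsdef
      have hmul : ∀ m : Fin N, (dft N).mulVec s m = 1 := by
        intro m
        simp only [Matrix.mulVec, dotProduct, hsdef, mul_ite, mul_zero]
        rw [Finset.sum_ite_eq' Finset.univ z0]
        simp only [Finset.mem_univ, if_true]
        have : dft N m z0 = 1 / ((Real.sqrt N : ℝ) : ℂ) := by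
          simp [dft, hz0]
        rw [this]
        field_simp
      have heq := H s (fun _ => 0)
        (by
          intro n hn
          have hne : n ≠ z0 := by
            intro h
            rw [h] at hn
            exact h0 hn
          simp [hsdef, hne])
        (fun _ _ => rfl)
        (by
          intro m
          have hzero : (dft N).mulVec (fun _ => (0:ℂ)) m = 0 := by
            simp [Matrix.mulVec, dotProduct]
          rw [hmul m, hzero, sub_zero]
          exact ⟨1, 0, by norm_num⟩)
      have := congrFun heq z0
      simp [hsdef] at this
      exact hN0.ne' (by exact_mod_cast this)
    refine ⟨?_, h0V⟩
    by_contra hnt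
    rw [Set.not_nontrivial_iff] at hnt
    set s : Fin N → ℂ := fun n =>
      1 / ((Real.sqrt N : ℝ) : ℂ) * (1 - Complex.exp (2 * Real.pi * Complex.I * n / N)) with hsdef
    have hmul : ∀ m : Fin N, (dft N).mulVec s m =
        ((if (N:ℤ) ∣ (-(m:ℤ)) then (N:ℂ) else 0) - (if (N:ℤ) ∣ (1-(m:ℤ)) then (N:ℂ) else 0)) / N := by
      intro m
      simp only [Matrix.mulVec, dotProduct, hsdef, dft, Matrix.of_apply]
      have hterm : ∀ p : Fin N,
          1 / ((Real.sqrt N : ℝ) : ℂ) * Complex.exp (-(2 * Real.pi * Complex.I * m * p) / N)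
            * (1 / ((Real.sqrt N : ℝ) : ℂ) * (1 - Complex.exp (2 * Real.pi * Complex.I * p / N)))
          = 1 / (N:ℂ) * (Complex.exp (2 * Real.pi * Complex.I * p * ((-(m:ℤ) : ℤ) : ℂ) / N)
              - Complex.exp (2 * Real.pi * Complex.I * p * ((1 - (m:ℤ) : ℤ) : ℂ) / N)) := by
        intro p
        have h1 : Complex.exp (-(2 * Real.pi * Complex.I * m * p) / N)
            = Complex.exp (2 * Real.pi * Complex.I * p * ((-(m:ℤ) : ℤ) : ℂ) / N) := by
          congr 1
          push_cast
          ring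
        have h2 : Complex.exp (-(2 * Real.pi * Complex.I * m * p) / N)
            * Complex.exp (2 * Real.pi * Complex.I * p / N)
            = Complex.exp (2 * Real.pi * Complex.I * p * ((1 - (m:ℤ) : ℤ) : ℂ) / N) := by
          rw [← Complex.exp_add]
          congr 1
          push_cast
          field_simp
          ring
        have hNR : ((Real.sqrt N : ℝ) : ℂ) * ((Real.sqrt N : ℝ) : ℂ) = (N:ℂ) := by
          rw [← Complex.ofReal_mul, Real.mul_self_sqrt (by positivity)]
          norm_num
        have hinv2 : 1 / ((Real.sqrt N : ℝ) : ℂ) * (1 / ((Real.sqrt N : ℝ) : ℂ)) = 1 / (N:ℂ) := by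
          rw [div_mul_div_comm, one_mul, hNR]
        rw [← h1, ← h2]
        linear_combination (Complex.exp (-(2 * Real.pi * Complex.I * m * p) / N)
          * (1 - Complex.exp (2 * Real.pi * Complex.I * p / N))) * hinv2
      rw [Finset.sum_congr rfl fun p _ => hterm p, ← Finset.mul_sum]
      rw [Finset.sum_sub_distrib, ModDFTAux.sum_exp_int N hN0 (-(m:ℤ)),
        ModDFTAux.sum_exp_int N hN0 (1 - (m:ℤ))]
      field_simp
    have heq := H s (fun _ => 0)
      (by
        intro n hn
        have : (n:ℕ) = 0 := hnt hn h0V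
        simp [hsdef, this])
      (fun _ _ => rfl)
      (by
        intro m
        have hzero : (dft N).mulVec (fun _ => (0:ℂ)) m = 0 := by
          simp [Matrix.mulVec, dotProduct]
        rw [hmul m, hzero, sub_zero]
        by_cases hd1 : (N:ℤ) ∣ (-(m:ℤ)) <;> by_cases hd2 : (N:ℤ) ∣ (1-(m:ℤ)) <;>
          simp only [hd1, hd2, if_true, if_false]
        · exact ⟨0, 0, by simp [hNC]⟩
        · exact ⟨1, 0, by simp [hNC]⟩
        · exact ⟨-1, 0, by simp [hNC]⟩
        · exact ⟨0, 0, by norm_num⟩)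
    have := congrFun heq ⟨1, hN1⟩
    simp only [hsdef] at this
    have hexp1 : Complex.exp (2 * Real.pi * Complex.I * ((⟨1, hN1⟩ : Fin N) : ℕ) / N) ≠ 1 := by
      have hprim := Complex.isPrimitiveRoot_exp N hN0.ne'
      have := hprim.ne_one hN1
      simpa using this
    rw [mul_eq_zero] at this
    rcases this with h | h
    · exact hsC (by simpa using h)
    · rw [sub_eq_zero] at h
      exact hexp1 h.symm
  · rintro ⟨hnt, h0V⟩
    intro s s' hsV hs'V hG
    obtain ⟨x, hx, y, hy, hxy⟩ := hnt
    obtain ⟨k, hkV, hk0⟩ : ∃ k, k ∈ V ∧ k ≠ 0 := by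
      by_cases hx0 : x = 0
      · exact ⟨y, hy, fun h => hxy (by rw [hx0, h])⟩
      · exact ⟨x, hx, hx0⟩
    have hkN : k < N := hV k hkV
    set d : Fin N → ℂ := fun n => s n - s' n with hd
    have hgd : ∀ m, (dft N).mulVec d m = (dft N).mulVec s m - (dft N).mulVec s' m := by
      intro m
      simp only [Matrix.mulVec, dotProduct, hd, mul_sub, Finset.sum_sub_distrib]
    set g : Fin N → ℂ := fun m => (dft N).mulVec d m with hg
    have hgG : ∀ m, IsGaussianInt (g m) := by
      intro m
      rw [hg]
      simp only [hgd m]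
      exact hG m
    have hinv := ModDFTAux.dft_inversion N hN0 d
    have hd0 : d ⟨0, hN0⟩ = 0 := by
      rw [hd]
      simp only
      rw [hsV ⟨0, hN0⟩ h0V, hs'V ⟨0, hN0⟩ h0V, sub_self]
    have hdk : d ⟨k, hkN⟩ = 0 := by
      rw [hd]
      simp only
      rw [hsV ⟨k, hkN⟩ hkV, hs'V ⟨k, hkN⟩ hkV, sub_self]
    have h0 : ∑ m : Fin N, g m = 0 := by
      have h := hinv ⟨0, hN0⟩
      rw [hd0, mul_zero] at h
      rw [← h]
      refine Finset.sum_congr rfl fun m _ => ?_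
      have : Complex.exp (2 * Real.pi * Complex.I * m * ((⟨0, hN0⟩ : Fin N) : ℕ) / N) = 1 := by
        norm_num
      rw [this, mul_one, hg]
    have hcop : Nat.Coprime k N := by
      rw [Nat.coprime_comm]
      exact (Nat.Prime.coprime_iff_not_dvd hN).mpr
        (fun hdvd => absurd (Nat.le_of_dvd (Nat.pos_of_ne_zero hk0) hdvd) (not_le.mpr hkN))
    set ζ : ℂ := Complex.exp (2 * Real.pi * Complex.I * ((k:ℂ) / N)) with hζdef
    have hζ : IsPrimitiveRoot ζ N := Complex.isPrimitiveRoot_exp_of_coprime k N hN0.ne' hcop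
    have h1 : ∑ m : Fin N, g m * ζ ^ (m:ℕ) = 0 := by
      have h := hinv ⟨k, hkN⟩
      rw [hdk, mul_zero] at h
      rw [← h]
      refine Finset.sum_congr rfl fun m _ => ?_
      have : ζ ^ (m:ℕ) = Complex.exp (2 * Real.pi * Complex.I * m * ((⟨k, hkN⟩ : Fin N) : ℕ) / N) := by
        rw [hζdef, ← Complex.exp_nat_mul]
        congr 1
        simp only [Fin.val_mk]
        field_simp
      rw [this, hg]
    have hzero := ModDFTAux.key_zero N hN ζ hζ g hgG h0 h1
    have hdz : ∀ n, d n = 0 := by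
      intro n
      have h := hinv n
      rw [Finset.sum_congr rfl (fun m _ => by
        rw [show (dft N).mulVec d m = g m from rfl, hzero m, zero_mul])] at h
      rw [Finset.sum_const_zero] at h
      exact (mul_eq_zero.mp h.symm).resolve_left hsC
    funext n
    have hsub : s n - s' n = 0 := hdz n
    exact sub_eq_zero.mp hsub
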